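/- (Symmetric Lovász Local Lemma) Let A_1,...,A_n be events in a probability space such that each A_i is mutually independent of all but at most k of the other events, and Pr[A_i] ≤ p for all i. If e·p·(k+1) ≤ 1, then Pr[⋂_i complement(A_i)] > 0. -/

import Mathlib

open MeasureTheory ProbabilityTheory

/-- Splitting a measure of an intersection of complements along one more event. -/
lemma lll_split {Ω : Type*} [MeasurableSpace Ω] (μ : Measure Ω) [IsProbabilityMeasure μ]
    {n : ℕ} (A : Fin n → Set Ω) (hA : ∀ i, MeasurableSet (A i))
    (S : Finset (Fin n)) (i : Fin n) :
    (μ (⋂ j ∈ S, (A j)ᶜ)).toReal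
      = (μ (A i ∩ ⋂ j ∈ S, (A j)ᶜ)).toReal + (μ (⋂ j ∈ insert i S, (A j)ᶜ)).toReal := by
  have e1 : ⋂ j ∈ insert i S, (A j)ᶜ = (⋂ j ∈ S, (A j)ᶜ) \ A i := by
    rw [Finset.set_biInter_insert]
    ext ω
    simp [Set.mem_diff]
    tauto
  have e2 : μ ((⋂ j ∈ S, (A j)ᶜ) ∩ A i) + μ ((⋂ j ∈ S, (A j)ᶜ) \ A i)
      = μ (⋂ j ∈ S, (A j)ᶜ) := measure_inter_add_diff _ (hA i)
  rw [e1, Set.inter_comm, ← ENNReal.toReal_add (measure_ne_top μ _) (measure_ne_top μ _), e2]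

/-- Main inductive step of the Lovász local lemma. -/
lemma lll_main {Ω : Type*} [MeasurableSpace Ω] (μ : Measure Ω) [IsProbabilityMeasure μ]
    {n : ℕ} (A : Fin n → Set Ω) (hA : ∀ i, MeasurableSet (A i))
    (k : ℕ) (p x : ℝ)
    (J : Fin n → Finset (Fin n))
    (hk : ∀ i, (Finset.univ \ insert i (J i)).card ≤ k)
    (hind : ∀ i (T : Finset (Fin n)), T ⊆ J i →
      μ (A i ∩ ⋂ j ∈ T, (A j)ᶜ) = μ (A i) * μ (⋂ j ∈ T, (A j)ᶜ))
    (hp : ∀ i, (μ (A i)).toReal ≤ p)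
    (hx0 : 0 ≤ x) (hx1 : x ≤ 1) (hpx : p ≤ x * (1 - x) ^ k) :
    ∀ (N : ℕ) (S : Finset (Fin n)), S.card ≤ N → ∀ i, i ∉ S →
      (μ (A i ∩ ⋂ j ∈ S, (A j)ᶜ)).toReal ≤ x * (μ (⋂ j ∈ S, (A j)ᶜ)).toReal := by
  have hx1' : 0 ≤ 1 - x := by linarith
  have hbase : ∀ i : Fin n, (μ (A i)).toReal ≤ x := by
    intro i
    have h1 : (1 - x) ^ k ≤ 1 := pow_le_one₀ hx1' (by linarith)
    have h2 : x * (1 - x) ^ k ≤ x * 1 := mul_le_mul_of_nonneg_left h1 hx0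
    calc (μ (A i)).toReal ≤ p := hp i
      _ ≤ x * (1 - x) ^ k := hpx
      _ ≤ x := by linarith
  intro N
  induction N with
  | zero =>
    intro S hS i _
    have hSe : S = ∅ := Finset.card_eq_zero.mp (Nat.le_zero.mp hS)
    subst hSe
    simp only [Finset.notMem_empty, Set.iInter_of_empty, Set.iInter_univ, Set.inter_univ,
      measure_univ, ENNReal.toReal_one, mul_one]
    exact hbase i
  | succ N ih =>
    intro S hS i hi
    classical
    set S₁ : Finset (Fin n) := S ∩ J i with hS₁def
    set S₂ : Finset (Fin n) := S \ J i with hS₂def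
    have hunion : S₁ ∪ S₂ = S := by
      ext j; simp [hS₁def, hS₂def]; tauto
    have hS₁J : S₁ ⊆ J i := Finset.inter_subset_right
    have hS₁S : S₁ ⊆ S := Finset.inter_subset_left
    have hS₂S : S₂ ⊆ S := Finset.sdiff_subset
    -- the inner claim
    have inner : ∀ T : Finset (Fin n), T ⊆ S₂ →
        (1 - x) ^ T.card * (μ (⋂ j ∈ S₁, (A j)ᶜ)).toReal
          ≤ (μ (⋂ j ∈ S₁ ∪ T, (A j)ᶜ)).toReal := by
      intro T
      induction T using Finset.induction_on with
      | empty => intro _; simp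
      | insert j T hj ihT =>
        intro hTS
        have hjS₂ : j ∈ S₂ := hTS (Finset.mem_insert_self j T)
        have hTsub : T ⊆ S₂ := fun a ha => hTS (Finset.mem_insert_of_mem ha)
        have hjJ : j ∉ J i := (Finset.mem_sdiff.mp hjS₂).2
        have hjnot : j ∉ S₁ ∪ T := by
          intro hmem
          rcases Finset.mem_union.mp hmem with h1 | h1
          · exact hjJ (hS₁J h1)
          · exact hj h1
        have hsubS : S₁ ∪ T ⊆ S := by
          intro a ha
          rcases Finset.mem_union.mp ha with h1 | h1
          · exact hS₁S h1
          · exact hS₂S (hTsub h1)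
        have hjS : j ∈ S := hS₂S hjS₂
        have hcard : (S₁ ∪ T).card ≤ N := by
          have hins : insert j (S₁ ∪ T) ⊆ S := by
            intro a ha
            rcases Finset.mem_insert.mp ha with h1 | h1
            · exact h1 ▸ hjS
            · exact hsubS h1
          have := Finset.card_le_card hins
          rw [Finset.card_insert_of_notMem hjnot] at this
          omega
        have key := ih (S₁ ∪ T) hcard j hjnot
        have split := lll_split μ A hA (S₁ ∪ T) j
        have h1 : (1 - x) * ((1 - x) ^ T.card * (μ (⋂ j ∈ S₁, (A j)ᶜ)).toReal)
            ≤ (1 - x) * (μ (⋂ j ∈ S₁ ∪ T, (A j)ᶜ)).toReal :=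
          mul_le_mul_of_nonneg_left (ihT hTsub) hx1'
        have hring : (1 - x) * (μ (⋂ j ∈ S₁ ∪ T, (A j)ᶜ)).toReal
            = (μ (⋂ j ∈ S₁ ∪ T, (A j)ᶜ)).toReal - x * (μ (⋂ j ∈ S₁ ∪ T, (A j)ᶜ)).toReal := by
          ring
        rw [Finset.union_insert, Finset.card_insert_of_notMem hj]
        calc (1 - x) ^ (T.card + 1) * (μ (⋂ j ∈ S₁, (A j)ᶜ)).toReal
            = (1 - x) * ((1 - x) ^ T.card * (μ (⋂ j ∈ S₁, (A j)ᶜ)).toReal) := by ring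
          _ ≤ (1 - x) * (μ (⋂ j ∈ S₁ ∪ T, (A j)ᶜ)).toReal := h1
          _ ≤ (μ (⋂ j' ∈ insert j (S₁ ∪ T), (A j')ᶜ)).toReal := by linarith
    -- properties of S₂
    have hS₂card : S₂.card ≤ k := by
      refine le_trans (Finset.card_le_card ?_) (hk i)
      intro a ha
      rw [Finset.mem_sdiff] at ha ⊢
      refine ⟨Finset.mem_univ a, ?_⟩
      rw [Finset.mem_insert]
      rintro (rfl | h1)
      · exact hi ha.1
      · exact ha.2 h1
    -- monotonicity
    have hsub : (⋂ j ∈ S, (A j)ᶜ) ⊆ ⋂ j ∈ S₁, (A j)ᶜ :=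
      Set.subset_iInter₂ fun j hj => Set.iInter₂_subset j (hS₁S hj)
    have hmono : (μ (A i ∩ ⋂ j ∈ S, (A j)ᶜ)).toReal ≤ (μ (A i ∩ ⋂ j ∈ S₁, (A j)ᶜ)).toReal :=
      ENNReal.toReal_mono (measure_ne_top μ _)
        (measure_mono (Set.inter_subset_inter_right _ hsub))
    have hindep_eq : (μ (A i ∩ ⋂ j ∈ S₁, (A j)ᶜ)).toReal
        = (μ (A i)).toReal * (μ (⋂ j ∈ S₁, (A j)ᶜ)).toReal := by
      rw [hind i S₁ hS₁J, ENNReal.toReal_mul]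
    have hPnn : 0 ≤ (μ (⋂ j ∈ S₁, (A j)ᶜ)).toReal := ENNReal.toReal_nonneg
    have hpow : (1 - x) ^ k ≤ (1 - x) ^ S₂.card :=
      pow_le_pow_of_le_one hx1' (by linarith) hS₂card
    have hinner := inner S₂ (le_refl S₂)
    calc (μ (A i ∩ ⋂ j ∈ S, (A j)ᶜ)).toReal
        ≤ (μ (A i ∩ ⋂ j ∈ S₁, (A j)ᶜ)).toReal := hmono
      _ = (μ (A i)).toReal * (μ (⋂ j ∈ S₁, (A j)ᶜ)).toReal := hindep_eq
      _ ≤ p * (μ (⋂ j ∈ S₁, (A j)ᶜ)).toReal := mul_le_mul_of_nonneg_right (hp i) hPnn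
      _ ≤ (x * (1 - x) ^ k) * (μ (⋂ j ∈ S₁, (A j)ᶜ)).toReal :=
          mul_le_mul_of_nonneg_right hpx hPnn
      _ ≤ (x * (1 - x) ^ S₂.card) * (μ (⋂ j ∈ S₁, (A j)ᶜ)).toReal :=
          mul_le_mul_of_nonneg_right (mul_le_mul_of_nonneg_left hpow hx0) hPnn
      _ = x * ((1 - x) ^ S₂.card * (μ (⋂ j ∈ S₁, (A j)ᶜ)).toReal) := by ring
      _ ≤ x * (μ (⋂ j ∈ S₁ ∪ S₂, (A j)ᶜ)).toReal := mul_le_mul_of_nonneg_left hinner hx0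
      _ = x * (μ (⋂ j ∈ S, (A j)ᶜ)).toReal := by rw [hunion]

theorem stmt_4 {Ω : Type*} [MeasurableSpace Ω] (μ : Measure Ω) [IsProbabilityMeasure μ]
    (n : ℕ) (A : Fin n → Set Ω) (hA : ∀ i, MeasurableSet (A i))
    (k : ℕ) (p : ℝ)
    (J : Fin n → Finset (Fin n)) (hJi : ∀ i, i ∉ J i)
    (hk : ∀ i, (Finset.univ \ insert i (J i)).card ≤ k)
    (hindep : ∀ i, Indep (MeasurableSpace.generateFrom {A i})
      (MeasurableSpace.generateFrom (A '' (J i : Set (Fin n)))) μ)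
    (hp : ∀ i, (μ (A i)).toReal ≤ p)
    (h : Real.exp 1 * p * (k + 1) ≤ 1) :
    0 < μ (⋂ i, (A i)ᶜ) := by
  classical
  -- independence for finite intersections
  have hind : ∀ i (T : Finset (Fin n)), T ⊆ J i →
      μ (A i ∩ ⋂ j ∈ T, (A j)ᶜ) = μ (A i) * μ (⋂ j ∈ T, (A j)ᶜ) := by
    intro i T hT
    have h1 : MeasurableSet[MeasurableSpace.generateFrom {A i}] (A i) :=
      MeasurableSpace.measurableSet_generateFrom (Set.mem_singleton _)
    have h2 : MeasurableSet[MeasurableSpace.generateFrom (A '' (J i : Set (Fin n)))]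
        (⋂ j ∈ T, (A j)ᶜ) := by
      refine Finset.measurableSet_biInter _ fun j hj => MeasurableSet.compl ?_
      exact MeasurableSpace.measurableSet_generateFrom ⟨j, Finset.mem_coe.mpr (hT hj), rfl⟩
    exact ((Indep_iff _ _ _).mp (hindep i)) _ _ h1 h2
  -- the chosen value of x
  set c : ℝ := (k : ℝ) + 1 with hc
  have hc0 : (0 : ℝ) < c := by positivity
  have hc1 : (0 : ℝ) < c + 1 := by positivity
  set x : ℝ := (c + 1)⁻¹ with hxdef
  have hx0 : 0 ≤ x := by positivity
  have hxlt : x < 1 := by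
    rw [hxdef]
    rw [inv_lt_one_iff₀]
    right
    have : (0 : ℝ) ≤ (k : ℝ) := Nat.cast_nonneg k
    rw [hc]; linarith
  have hx1 : x ≤ 1 := le_of_lt hxlt
  have h1mx : 1 - x = c / (c + 1) := by
    rw [hxdef]
    field_simp
    ring
  -- the key analytic inequality : p ≤ x * (1-x)^k
  have hE : ((c + 1) / c) ^ (k + 1) ≤ Real.exp 1 := by
    have he1 : 1 + 1 / c ≤ Real.exp (1 / c) := by
      have := Real.add_one_le_exp (1 / c)
      linarith
    have he2 : ((c + 1) / c) = 1 + 1 / c := by field_simp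
    have he3 : ((c + 1) / c) ^ (k + 1) ≤ (Real.exp (1 / c)) ^ (k + 1) := by
      rw [he2]
      refine pow_le_pow_left₀ (by positivity) he1 (k + 1)
    have he4 : (Real.exp (1 / c)) ^ (k + 1) = Real.exp 1 := by
      rw [← Real.exp_nat_mul]
      congr 1
      push_cast
      rw [hc]
      field_simp
    rw [he4] at he3
    exact he3
  have hkey : 1 ≤ Real.exp 1 * c * (x * (1 - x) ^ k) := by
    have hq : ((c + 1) / c) ^ (k + 1) * c * (x * (1 - x) ^ k) = 1 := by
      rw [h1mx, hxdef, div_pow, div_pow]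
      field_simp
      ring
    have hxk : 0 ≤ x * (1 - x) ^ k := by
      have : 0 ≤ 1 - x := by linarith
      positivity
    calc (1 : ℝ) = ((c + 1) / c) ^ (k + 1) * c * (x * (1 - x) ^ k) := hq.symm
      _ ≤ Real.exp 1 * c * (x * (1 - x) ^ k) := by
          refine mul_le_mul_of_nonneg_right (mul_le_mul_of_nonneg_right hE (le_of_lt hc0)) hxk
  have hpx : p ≤ x * (1 - x) ^ k := by
    have hEc : 0 < Real.exp 1 * c := by positivity
    have h' : Real.exp 1 * c * p ≤ 1 := by
      have : Real.exp 1 * p * ((k : ℝ) + 1) = Real.exp 1 * c * p := by rw [hc]; ring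
      calc Real.exp 1 * c * p = Real.exp 1 * p * ((k : ℝ) + 1) := by rw [hc]; ring
        _ ≤ 1 := h
    have h'' : Real.exp 1 * c * p ≤ Real.exp 1 * c * (x * (1 - x) ^ k) := le_trans h' hkey
    exact le_of_mul_le_mul_left h'' hEc
  -- the main lemma
  have main := lll_main μ A hA k p x J hk hind hp hx0 hx1 hpx
  -- the lower bound
  have lower : ∀ S : Finset (Fin n), (1 - x) ^ S.card ≤ (μ (⋂ j ∈ S, (A j)ᶜ)).toReal := by
    intro S
    induction S using Finset.induction_on with
    | empty => simp
    | insert i S hi ihS =>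
      have hmain := main S.card S (le_refl _) i hi
      have hsplit := lll_split μ A hA S i
      have h1 : (1 - x) * ((1 - x) ^ S.card) ≤ (1 - x) * (μ (⋂ j ∈ S, (A j)ᶜ)).toReal :=
        mul_le_mul_of_nonneg_left ihS (by linarith)
      have hring : (1 - x) * (μ (⋂ j ∈ S, (A j)ᶜ)).toReal
          = (μ (⋂ j ∈ S, (A j)ᶜ)).toReal - x * (μ (⋂ j ∈ S, (A j)ᶜ)).toReal := by ring
      rw [Finset.card_insert_of_notMem hi]
      calc (1 - x) ^ (S.card + 1) = (1 - x) * (1 - x) ^ S.card := by ring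
        _ ≤ (1 - x) * (μ (⋂ j ∈ S, (A j)ᶜ)).toReal := h1
        _ ≤ (μ (⋂ j ∈ insert i S, (A j)ᶜ)).toReal := by linarith
  have hfin := lower Finset.univ
  rw [Finset.card_univ, Fintype.card_fin] at hfin
  have hpospow : (0 : ℝ) < (1 - x) ^ n := pow_pos (by linarith) n
  have hCuniv : (⋂ j ∈ (Finset.univ : Finset (Fin n)), (A j)ᶜ) = ⋂ i, (A i)ᶜ := by
    simp
  have htr : 0 < (μ (⋂ i, (A i)ᶜ)).toReal := by
    rw [← hCuniv]; linarith
  by_contra hcon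
  push_neg at hcon
  have : μ (⋂ i, (A i)ᶜ) = 0 := le_antisymm hcon zero_le
  rw [this] at htr
  simp at htr
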